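/- Let Q : X → X be a linear operator and q ∈ X. If x ∈ X satisfies the projection equation (Q − I)P_K(x) + x = −q, then x̄ := P_K(x) is a solution of the KKT system for the quadratic conic program min ½⟨x, Qx⟩ + ⟨q, x⟩ over x ∈ K; that is, x̄ ∈ K, Qx̄ + q ∈ K*, and ⟨Qx̄ + q, x̄⟩ = 0. -/
import Mathlib


open RealInnerProductSpace Filter Topology

variable {X : Type*} [NormedAddCommGroup X] [InnerProductSpace ℝ X] [FiniteDimensional ℝ X]

/-- The Clarke generalized Jacobian of a map `F : X → X` at `x`: the convex hull of all
limits of Fréchet derivatives of `F` along sequences of differentiability points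
converging to `x`. -/
def clarkeJacobian (F : X → X) (x : X) : Set (X →L[ℝ] X) :=
  convexHull ℝ {V : X →L[ℝ] X | ∃ u : ℕ → X,
    (∀ k, DifferentiableAt ℝ F (u k)) ∧
    Tendsto u atTop (𝓝 x) ∧
    Tendsto (fun k => fderiv ℝ F (u k)) atTop (𝓝 V)}

/-- `P` is the metric projection onto `K`: `P z` belongs to `K` and is a nearest point
of `K` to `z`. -/
def IsMetricProjection (K : Set X) (P : X → X) : Prop :=
  ∀ z : X, P z ∈ K ∧ ∀ y ∈ K, ‖z - P z‖ ≤ ‖z - y‖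

/-- If `x` solves the projection equation `(Q − I) (P x) + x = −q`, then `x̄ := P x` solves
the KKT system of the quadratic conic program: `x̄ ∈ K`, `Q x̄ + q ∈ K*`, and
`⟨Q x̄ + q, x̄⟩ = 0`. -/
theorem projEquation_solution_gives_KKT
    (K : Set X) (hne : K.Nonempty) (hcl : IsClosed K) (hconv : Convex ℝ K)
    (hcone : ∀ c : ℝ, 0 ≤ c → ∀ y ∈ K, c • y ∈ K)
    (P : X → X) (hP : IsMetricProjection K P)
    (Q : X →L[ℝ] X) (q x : X)
    (hx : (Q - 1) (P x) + x = -q) :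
    P x ∈ K ∧ (∀ z ∈ K, 0 ≤ ⟪Q (P x) + q, z⟫) ∧ ⟪Q (P x) + q, P x⟫ = 0 := by
  obtain ⟨hPK, hmin⟩ := hP x
  -- variational inequality
  have hvar : ∀ w ∈ K, ⟪x - P x, w - P x⟫ ≤ 0 := by
    rw [← norm_eq_iInf_iff_real_inner_le_zero hconv hPK]
    haveI : Nonempty K := ⟨⟨P x, hPK⟩⟩
    refine le_antisymm (le_ciInf fun w => hmin w w.2) ?_
    exact ciInf_le ⟨0, fun _ ⟨_, h⟩ => h ▸ norm_nonneg _⟩ (⟨P x, hPK⟩ : K)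
  -- Q (P x) + q = P x - x
  have key : Q (P x) + q = P x - x := by
    have := hx
    simp only [ContinuousLinearMap.sub_apply, ContinuousLinearMap.one_apply] at this
    linear_combination (norm := module) this
  refine ⟨hPK, ?_, ?_⟩
  · intro z hz
    have h1 : P x + z ∈ K := by
      have := hconv hPK hz (by norm_num : (0:ℝ) ≤ 1/2) (by norm_num : (0:ℝ) ≤ 1/2) (by norm_num)
      have h2 := hcone 2 (by norm_num) _ this
      rwa [smul_add, smul_smul, smul_smul, show (2:ℝ) * (1/2) = 1 by norm_num, one_smul, one_smul] at h2
    have := hvar _ h1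
    rw [key]
    simp only [add_sub_cancel_left] at this
    rw [show P x - x = -(x - P x) by abel, inner_neg_left]
    linarith
  · rw [key]
    have h0 : (0:X) ∈ K := by
      obtain ⟨y, hy⟩ := hne
      simpa using hcone 0 le_rfl y hy
    have h2 : (2:ℝ) • P x ∈ K := hcone 2 (by norm_num) _ hPK
    have ha := hvar _ h0
    have hb := hvar _ h2
    rw [show (2:ℝ) • P x - P x = P x by module] at hb
    rw [zero_sub, inner_neg_right] at ha
    rw [show P x - x = -(x - P x) by abel, inner_neg_left]
    linarith
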